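/- For every σ > 0, every nonzero integer n, and every integer k ≥ 1, there exists a real number ν with kπ/2 < ν < kπ/2 + π/4 such that (ν²/n² + 1)·tan(2ν) = σ·ν. -/

import Mathlib

/-- For every `σ > 0`, every nonzero integer `n` and every integer `k ≥ 1`, the transcendental
equation `(ν²/n² + 1)·tan(2ν) = σ·ν` has a root `ν` in the interval `(kπ/2, kπ/2 + π/4)`. -/
theorem stmt4 (σ : ℝ) (hσ : 0 < σ) (n : ℤ) (hn : n ≠ 0) (k : ℕ) (hk : 1 ≤ k) :
    ∃ ν : ℝ, (k:ℝ) * Real.pi / 2 < ν ∧ ν < (k:ℝ) * Real.pi / 2 + Real.pi / 4 ∧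
      (ν^2 / (n:ℝ)^2 + 1) * Real.tan (2 * ν) = σ * ν := by
  have hπ := Real.pi_pos
  have hk1 : (1:ℝ) ≤ (k:ℝ) := by exact_mod_cast hk
  set a : ℝ := (k:ℝ) * Real.pi / 2 with ha
  have ha0 : 0 < a := by
    have : 0 < (k:ℝ) := by linarith
    positivity
  set M : ℝ := σ * (a + Real.pi / 4) + 1 with hMdef
  have hM : 0 < M := by positivity
  set t : ℝ := Real.arctan M with htdef
  have ht0 : 0 < t := by
    have := Real.arctan_strictMono hM
    rwa [Real.arctan_zero] at this
  have ht2 : t < Real.pi / 2 := Real.arctan_lt_pi_div_two M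
  have htant : Real.tan t = M := Real.tan_arctan M
  set b : ℝ := a + t / 2 with hb
  clear_value a M t b
  have hab : a < b := by simp only [hb]; linarith
  have hn2 : (0:ℝ) < (n:ℝ)^2 := by
    have : (n:ℝ) ≠ 0 := Int.cast_ne_zero.mpr hn
    positivity
  set f : ℝ → ℝ := fun x => (x^2 / (n:ℝ)^2 + 1) * Real.tan (2*x) - σ * x with hf
  have hcos : ∀ x ∈ Set.Icc a b, Real.cos (2*x) ≠ 0 := by
    intro x hx
    obtain ⟨hx1, hx2⟩ := hx
    have hrw : 2*x = (k:ℝ) * Real.pi - ((k:ℝ) * Real.pi - 2*x) := by ring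
    rw [hrw, Real.cos_nat_mul_pi_sub]
    have hpos : 0 < Real.cos ((k:ℝ) * Real.pi - 2*x) := by
      apply Real.cos_pos_of_mem_Ioo
      constructor
      · nlinarith
      · simp only [ha] at hx1
        nlinarith
    intro hz
    rcases mul_eq_zero.mp hz with h | h
    · exact (pow_ne_zero k (by norm_num : (-1:ℝ) ≠ 0)) h
    · exact hpos.ne' h
  have hcont : ContinuousOn f (Set.Icc a b) := by
    apply ContinuousOn.sub
    · apply ContinuousOn.mul
      · fun_prop
      · exact Real.continuousOn_tan.comp (by fun_prop) (fun x hx => hcos x hx)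
    · fun_prop
  have hfa : f a < 0 := by
    have h2a : 2 * a = ((k:ℤ):ℝ) * Real.pi := by simp only [ha]; push_cast; ring
    simp only [hf, h2a, Real.tan_int_mul_pi, mul_zero, zero_sub, neg_neg]
    nlinarith
  have hfb : 0 < f b := by
    have h2b : 2 * b = t + (k:ℕ) * Real.pi := by rw [hb, ha]; ring
    have htan : Real.tan (2 * b) = M := by
      rw [h2b, Real.tan_add_nat_mul_pi, htant]
    have hc1 : (1:ℝ) ≤ b^2 / (n:ℝ)^2 + 1 := by
      have : 0 ≤ b^2 / (n:ℝ)^2 := by positivity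
      linarith
    have hbineq : b < a + Real.pi / 4 := by simp only [hb]; linarith
    have : σ * b < M := by
      simp only [hMdef]
      nlinarith
    simp only [hf, htan]
    nlinarith [mul_le_mul_of_nonneg_right hc1 hM.le]
  have h0 : (0:ℝ) ∈ Set.Ioo (f a) (f b) := ⟨hfa, hfb⟩
  obtain ⟨ν, hν, hfν⟩ := intermediate_value_Ioo hab.le hcont h0
  refine ⟨ν, hν.1, ?_, ?_⟩
  · have : ν < b := hν.2
    simp only [hb] at this
    simp only [ha] at *
    linarith
  · simp only [hf] at hfν
    linarith
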